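/- Let Ω ⊆ ℝ^N be a measurable set and f : Ω × ℝ → ℝ satisfy: (f1) f is continuous and for every M > 0 there exists C_M > 0 with |f(x,s)| ≤ C_M for all x ∈ Ω and |s| ≤ M; (f2) for every α > 0, f(x,s)/e^{α s²} → 0 as |s| → ∞ uniformly in x ∈ Ω; and, in case Ω has infinite Lebesgue measure, additionally (f5-u) there exist μ > 1, C₀ > 0 and δ₀ > 0 such that |f(x,s)| ≤ C₀ |s|^μ for all x ∈ Ω and |s| ≤ δ₀. Let u ∈ 𝓜(Ω) and (u_n) ⊂ 𝓜(Ω) be such that ‖u_n − u‖_{𝓛(Ω)} → 0. Then lim_{n→∞} ∫_Ω ( f(x, u_n(x)) − f(x, u(x)) )² dx = 0. -/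

import Mathlib

open MeasureTheory Filter

/-- The Luxemburg norm ‖u‖_{𝓛} := inf{ k > 0 : ∫ (e^{(u/k)²} − 1) dμ ≤ 1 }. -/
noncomputable def luxNorm {α : Type*} [MeasurableSpace α] (μ : Measure α) (u : α → ℝ) : ℝ :=
  sInf {k : ℝ | 0 < k ∧ ∫⁻ x, ENNReal.ofReal (Real.exp ((u x / k) ^ 2) - 1) ∂μ ≤ 1}

lemma exp_theta' {θ a : ℝ} (hθ0 : 0 ≤ θ) (hθ1 : θ ≤ 1) :
    Real.exp (θ * a) - 1 ≤ θ * (Real.exp a - 1) := by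
  have h : Real.exp (θ * a + (1-θ) * 0) ≤ θ * Real.exp a + (1-θ) * Real.exp 0 :=
    convexOn_exp.2 (Set.mem_univ a) (Set.mem_univ (0:ℝ)) hθ0 (by linarith) (by ring)
  simp only [mul_zero, add_zero, Real.exp_zero, mul_one] at h
  linarith

lemma exp_amgm (a b : ℝ) :
    Real.exp (a + b) - 1 ≤ (Real.exp (2*a) - 1) / 2 + (Real.exp (2*b) - 1) / 2 := by
  have h1 : Real.exp (a+b) = Real.exp a * Real.exp b := Real.exp_add a b
  have h2 : Real.exp (2*a) = Real.exp a ^ 2 := by rw [two_mul, Real.exp_add]; ring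
  have h3 : Real.exp (2*b) = Real.exp b ^ 2 := by rw [two_mul, Real.exp_add]; ring
  nlinarith [sq_nonneg (Real.exp a - Real.exp b)]

lemma one_le_exp_sub {t : ℝ} (ht : 0 ≤ t) : 0 ≤ Real.exp t - 1 := by
  have := Real.add_one_le_exp t; linarith

lemma young_ineq {η : ℝ} (hη : 0 < η) (a b : ℝ) :
    (a + b)^2 ≤ (1+η)*a^2 + (1+η⁻¹)*b^2 := by
  have h3 : 0 ≤ η⁻¹ * ((η*a - b)^2) := by positivity
  have hexp : η⁻¹ * ((η*a - b)^2) = η*a^2 - 2*(a*b) + η⁻¹*b^2 := by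
    field_simp; ring
  nlinarith

lemma finite_exp_mul {α : Type*} [MeasurableSpace α] {μ : Measure α} {w : α → ℝ}
    (hwM : ∀ k : ℝ, 0 < k → ∫⁻ x, ENNReal.ofReal (Real.exp ((w x / k) ^ 2) - 1) ∂μ < ⊤)
    {c : ℝ} (hc : 0 < c) :
    ∫⁻ x, ENNReal.ofReal (Real.exp (c * (w x)^2) - 1) ∂μ < ⊤ := by
  have h := hwM (Real.sqrt c)⁻¹ (by positivity)
  have he : ∀ x, (w x / (Real.sqrt c)⁻¹) ^ 2 = c * (w x)^2 := by
    intro x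
    rw [div_eq_mul_inv, inv_inv, mul_pow, Real.sq_sqrt hc.le]; ring
  simp only [he] at h
  exact h

section Lux
variable {α : Type*} [MeasurableSpace α] {μ : Measure α}

lemma mem_luxSet_of_finite {w : α → ℝ} (hw : Measurable w)
    (hfin : ∫⁻ x, ENNReal.ofReal (Real.exp (1 * (w x) ^ 2) - 1) ∂μ < ⊤) :
    ∃ k : ℝ, 0 < k ∧ ∫⁻ x, ENNReal.ofReal (Real.exp ((w x / k) ^ 2) - 1) ∂μ ≤ 1 := by
  set T := ∫⁻ x, ENNReal.ofReal (Real.exp (1 * (w x) ^ 2) - 1) ∂μ with hT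
  set k : ℝ := Real.sqrt T.toReal + 1 with hk
  have hk0 : 0 < k := by positivity
  have hk1 : 1 ≤ k := by
    have := Real.sqrt_nonneg T.toReal; simp [hk]
  have hkT : T.toReal ≤ k ^ 2 := by
    have h1 := Real.sq_sqrt (ENNReal.toReal_nonneg (a := T))
    have h2 := Real.sqrt_nonneg T.toReal
    nlinarith
  refine ⟨k, hk0, ?_⟩
  have hθ0 : (0:ℝ) ≤ (k^2)⁻¹ := by positivity
  have hθ1 : (k^2)⁻¹ ≤ 1 := by
    rw [inv_le_one_iff₀]; right; nlinarith
  calc ∫⁻ x, ENNReal.ofReal (Real.exp ((w x / k) ^ 2) - 1) ∂μ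
      ≤ ∫⁻ x, ENNReal.ofReal ((k^2)⁻¹ * (Real.exp (1 * (w x)^2) - 1)) ∂μ := by
        apply lintegral_mono
        intro x
        apply ENNReal.ofReal_le_ofReal
        have : (w x / k) ^ 2 = (k^2)⁻¹ * (1 * (w x)^2) := by
          field_simp
        rw [this]
        exact exp_theta' hθ0 hθ1
    _ = ENNReal.ofReal ((k^2)⁻¹) * T := by
        rw [hT]
        rw [← lintegral_const_mul' _ _ (by simp : ENNReal.ofReal ((k^2)⁻¹) ≠ ⊤)]
        congr 1; funext x
        rw [← ENNReal.ofReal_mul hθ0]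
    _ ≤ ENNReal.ofReal ((k^2)⁻¹) * ENNReal.ofReal (k^2) := by
        gcongr
        rw [← ENNReal.ofReal_toReal hfin.ne]
        exact ENNReal.ofReal_le_ofReal hkT
    _ ≤ 1 := by
        rw [← ENNReal.ofReal_mul hθ0]
        rw [inv_mul_cancel₀ (by positivity)]
        simp

lemma eventually_lux_le_one {v : ℕ → α → ℝ} (hv : ∀ n, Measurable (v n))
    (hfin : ∀ n, ∫⁻ x, ENNReal.ofReal (Real.exp (1 * (v n x) ^ 2) - 1) ∂μ < ⊤)
    (hlux : Tendsto (fun n => luxNorm μ (v n)) atTop (nhds 0))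
    {c : ℝ} (hc : 0 < c) :
    ∀ᶠ n in atTop, ∫⁻ x, ENNReal.ofReal (Real.exp (c * (v n x) ^ 2) - 1) ∂μ ≤ 1 := by
  have hkpos : (0:ℝ) < (Real.sqrt c)⁻¹ := by positivity
  have hev : ∀ᶠ n in atTop, luxNorm μ (v n) < (Real.sqrt c)⁻¹ :=
    hlux.eventually_lt_const hkpos
  filter_upwards [hev] with n hn
  set S := {k : ℝ | 0 < k ∧ ∫⁻ x, ENNReal.ofReal (Real.exp ((v n x / k) ^ 2) - 1) ∂μ ≤ 1} with hS
  obtain ⟨k0, hk00, hk01⟩ := mem_luxSet_of_finite (hv n) (hfin n)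
  have hSne : S.Nonempty := ⟨k0, hk00, hk01⟩
  have hSbdd : BddBelow S := ⟨0, fun x hx => le_of_lt hx.1⟩
  obtain ⟨k', hk'S, hk'lt⟩ := exists_lt_of_csInf_lt hSne hn
  obtain ⟨hk'0, hk'int⟩ := hk'S
  refine le_trans (lintegral_mono fun x => ?_) hk'int
  apply ENNReal.ofReal_le_ofReal
  have hle : c * (v n x) ^ 2 ≤ (v n x / k') ^ 2 := by
    rw [div_pow]
    have hcc : c ≤ (k'^2)⁻¹ := by
      have h1 : k' ^ 2 < ((Real.sqrt c)⁻¹) ^ 2 := by nlinarith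
      have h2 : ((Real.sqrt c)⁻¹) ^ 2 = c⁻¹ := by
        rw [inv_pow, Real.sq_sqrt hc.le]
      rw [h2] at h1
      have := (inv_lt_inv₀ (by positivity) (by positivity)).mpr h1
      rw [inv_inv] at this
      exact this.le
    have hsq : (0:ℝ) ≤ (v n x)^2 := sq_nonneg _
    have h3 := mul_le_mul_of_nonneg_right hcc hsq
    rw [div_eq_mul_inv]
    nlinarith
  have := Real.exp_le_exp.2 hle
  linarith

variable {v : ℕ → α → ℝ} (hv : ∀ n, Measurable (v n))
    (hfin : ∀ n, ∫⁻ x, ENNReal.ofReal (Real.exp (1 * (v n x) ^ 2) - 1) ∂μ < ⊤)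
    (hlux : Tendsto (fun n => luxNorm μ (v n)) atTop (nhds 0))

include hv hfin hlux

lemma eventually_lux_le_small {c θ : ℝ} (hc : 0 < c) (hθ : 0 < θ) :
    ∀ᶠ n in atTop, ∫⁻ x, ENNReal.ofReal (Real.exp (c * (v n x) ^ 2) - 1) ∂μ
      ≤ ENNReal.ofReal θ := by
  set θ' := min θ 1 with hθ'
  have hθ'0 : 0 < θ' := lt_min hθ one_pos
  have hθ'1 : θ' ≤ 1 := min_le_right _ _
  have h1 := eventually_lux_le_one hv hfin hlux (c := c / θ') (by positivity)
  filter_upwards [h1] with n hn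
  calc ∫⁻ x, ENNReal.ofReal (Real.exp (c * (v n x) ^ 2) - 1) ∂μ
      ≤ ∫⁻ x, ENNReal.ofReal (θ' * (Real.exp (c / θ' * (v n x) ^ 2) - 1)) ∂μ := by
        apply lintegral_mono; intro x
        apply ENNReal.ofReal_le_ofReal
        have : c * (v n x) ^ 2 = θ' * (c / θ' * (v n x) ^ 2) := by
          field_simp
        rw [this]
        exact exp_theta' hθ'0.le hθ'1
    _ = ENNReal.ofReal θ' * ∫⁻ x, ENNReal.ofReal (Real.exp (c / θ' * (v n x) ^ 2) - 1) ∂μ := by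
        rw [← lintegral_const_mul' _ _ (by simp : ENNReal.ofReal θ' ≠ ⊤)]
        congr 1; funext x
        rw [← ENNReal.ofReal_mul hθ'0.le]
    _ ≤ ENNReal.ofReal θ' * 1 := by gcongr
    _ ≤ ENNReal.ofReal θ := by
        rw [mul_one]
        exact ENNReal.ofReal_le_ofReal (min_le_left _ _)

lemma eventually_sq_small {θ : ℝ} (hθ : 0 < θ) :
    ∀ᶠ n in atTop, ∫⁻ x, ENNReal.ofReal ((v n x) ^ 2) ∂μ ≤ ENNReal.ofReal θ := by
  have h1 := eventually_lux_le_one hv hfin hlux (c := θ⁻¹) (by positivity)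
  filter_upwards [h1] with n hn
  calc ∫⁻ x, ENNReal.ofReal ((v n x) ^ 2) ∂μ
      ≤ ∫⁻ x, ENNReal.ofReal (θ * (Real.exp (θ⁻¹ * (v n x) ^ 2) - 1)) ∂μ := by
        apply lintegral_mono; intro x
        apply ENNReal.ofReal_le_ofReal
        have ht := Real.add_one_le_exp (θ⁻¹ * (v n x) ^ 2)
        have : (v n x)^2 = θ * (θ⁻¹ * (v n x) ^ 2) := by field_simp
        nlinarith
    _ = ENNReal.ofReal θ * ∫⁻ x, ENNReal.ofReal (Real.exp (θ⁻¹ * (v n x) ^ 2) - 1) ∂μ := by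
        rw [← lintegral_const_mul' _ _ (by simp : ENNReal.ofReal θ ≠ ⊤)]
        congr 1; funext x
        rw [← ENNReal.ofReal_mul hθ.le]
    _ ≤ ENNReal.ofReal θ * 1 := by gcongr
    _ ≤ ENNReal.ofReal θ := by rw [mul_one]

end Lux

section TIM
variable {α : Type*} [MeasurableSpace α] {μ : Measure α}

lemma tim_of_small {un : ℕ → α → ℝ} {u : α → ℝ}
    (hv : ∀ n, Measurable (fun x => un n x - u x))
    (hsmall : ∀ θ : ℝ, 0 < θ → ∀ᶠ n in atTop,
      ∫⁻ x, ENNReal.ofReal (Real.exp (1 * (un n x - u x) ^ 2) - 1) ∂μ ≤ ENNReal.ofReal θ) :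
    TendstoInMeasure μ un atTop u := by
  rw [tendstoInMeasure_iff_dist]
  intro ε hε
  rw [ENNReal.tendsto_nhds_zero]
  intro η hη
  set m : ℝ := Real.exp (1 * ε ^ 2) - 1 with hm
  have hm0 : 0 < m := by
    have : (0:ℝ) < 1 * ε ^ 2 := by positivity
    have := Real.add_one_le_exp (1 * ε ^ 2)
    simp only [hm]
    nlinarith
  by_cases hηtop : η = ⊤
  · filter_upwards with n; simp [hηtop]
  set η' := min η 1 with hη'
  have hη'0 : 0 < η' := lt_min hη one_pos
  have hη'top : η' ≠ ⊤ := by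
    simp only [hη', ne_eq, min_eq_top, not_and]; intro h; exact absurd h hηtop
  have hη'toReal : 0 < η'.toReal := ENNReal.toReal_pos hη'0.ne' hη'top
  set θ : ℝ := m * η'.toReal with hθ
  have hθ0 : 0 < θ := by positivity
  filter_upwards [hsmall θ hθ0] with n hn
  have hsub : {x | ε ≤ dist (un n x) (u x)} ⊆
      {x | ENNReal.ofReal m ≤ ENNReal.ofReal (Real.exp (1 * (un n x - u x) ^ 2) - 1)} := by
    intro x hx
    simp only [Set.mem_setOf_eq, Real.dist_eq] at hx ⊢
    apply ENNReal.ofReal_le_ofReal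
    have h1 : ε ^ 2 ≤ (un n x - u x) ^ 2 := by
      have := abs_nonneg (un n x - u x)
      nlinarith [sq_abs (un n x - u x)]
    have := Real.exp_le_exp.2 (by linarith : 1 * ε ^ 2 ≤ 1 * (un n x - u x) ^ 2)
    simp only [hm]; linarith
  have hcheb := mul_meas_ge_le_lintegral₀
    (μ := μ)
    (f := fun x => ENNReal.ofReal (Real.exp (1 * (un n x - u x) ^ 2) - 1))
    ((((Real.measurable_exp.comp (((hv n).pow_const 2).const_mul 1)).sub
      measurable_const).ennreal_ofReal).aemeasurable) (ENNReal.ofReal m)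
  have h2 : ENNReal.ofReal m * μ {x | ε ≤ dist (un n x) (u x)} ≤ ENNReal.ofReal θ := by
    refine le_trans ?_ (le_trans hcheb hn)
    exact mul_le_mul_right (measure_mono hsub) _
  have hmne : ENNReal.ofReal m ≠ 0 := by
    simp [ENNReal.ofReal_eq_zero, not_le, hm0]
  have hmtop : ENNReal.ofReal m ≠ ⊤ := ENNReal.ofReal_ne_top
  calc μ {x | ε ≤ dist (un n x) (u x)}
      ≤ ENNReal.ofReal θ / ENNReal.ofReal m := by
        rw [ENNReal.le_div_iff_mul_le (Or.inl hmne) (Or.inl hmtop), mul_comm]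
        exact h2
    _ = ENNReal.ofReal η'.toReal := by
        rw [hθ, ENNReal.ofReal_mul hm0.le, mul_comm,
          mul_div_assoc, ENNReal.div_self hmne hmtop, mul_one]
    _ = η' := ENNReal.ofReal_toReal hη'top
    _ ≤ η := min_le_left _ _

end TIM

lemma aemeas_comp {β : Type*} [TopologicalSpace β] [MeasurableSpace β] [BorelSpace β]
    [SecondCountableTopology β]
    {Ω : Set β} (hΩ : MeasurableSet Ω) {F : β × ℝ → ℝ}
    (hF : ContinuousOn F (Ω ×ˢ (Set.univ : Set ℝ)))
    {μ : Measure β} {w : β → ℝ} (hw : Measurable w) :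
    AEMeasurable (fun x => F (x, w x)) (μ.restrict Ω) := by
  have hp : Measurable (fun x : β => (x, w x)) := measurable_id.prodMk hw
  set ν := Measure.map (fun x => (x, w x)) (μ.restrict Ω) with hν
  have hset : MeasurableSet (Ω ×ˢ (Set.univ : Set ℝ)) := hΩ.prod MeasurableSet.univ
  have h1 : AEMeasurable F (ν.restrict (Ω ×ˢ (Set.univ : Set ℝ))) := hF.aemeasurable hset
  have h2 : ν.restrict (Ω ×ˢ (Set.univ : Set ℝ)) = ν := by
    apply Measure.restrict_eq_self_of_ae_mem
    rw [hν]
    refine (MeasureTheory.ae_map_iff hp.aemeasurable hset).mpr ?_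
    filter_upwards [ae_restrict_mem hΩ] with x hx
    exact ⟨hx, Set.mem_univ _⟩
  rw [h2] at h1
  exact h1.comp_aemeasurable hp.aemeasurable

lemma claimP {β : Type*} {Ω : Set β} {f : β → ℝ → ℝ} {εr : ℝ} (hεr : 0 < εr)
    (hf1 : ∀ M : ℝ, 0 < M → ∃ C : ℝ, 0 < C ∧ ∀ x ∈ Ω, ∀ s : ℝ, |s| ≤ M → |f x s| ≤ C)
    (hf2 : ∀ α : ℝ, 0 < α → ∀ ε : ℝ, 0 < ε → ∃ M : ℝ, 0 < M ∧
      ∀ x ∈ Ω, ∀ s : ℝ, M ≤ |s| → |f x s| ≤ ε * Real.exp (α * s ^ 2))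
    (vtop : Prop)
    (hf5u : vtop → ∃ ν : ℝ, 1 < ν ∧ ∃ C₀ : ℝ, 0 < C₀ ∧ ∃ δ₀ : ℝ, 0 < δ₀ ∧
      ∀ x ∈ Ω, ∀ s : ℝ, |s| ≤ δ₀ → |f x s| ≤ C₀ * |s| ^ ν) :
    ∃ D E : ℝ, 0 ≤ D ∧ 0 ≤ E ∧ (vtop → E = 0) ∧
      ∀ x ∈ Ω, ∀ s : ℝ, (f x s)^2 ≤ 2*εr^2*(Real.exp (2*s^2)-1) + D * s^2 + E := by
  obtain ⟨M₀, hM₀, hfM⟩ := hf2 1 one_pos εr hεr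
  set M₁ : ℝ := max M₀ 1 with hM₁
  obtain ⟨C, hC, hfC1⟩ := hf1 M₁ (lt_of_lt_of_le one_pos (le_max_right _ _))
  have region1 : ∀ x ∈ Ω, ∀ s : ℝ, M₁ ≤ |s| →
      (f x s)^2 ≤ 2*εr^2*(Real.exp (2*s^2)-1) := by
    intro x hx s h
    have hb := hfM x hx s (le_trans (le_max_left _ _) h)
    have h1s : 1 ≤ |s| := le_trans (le_max_right _ _) h
    have hs2 : 1 ≤ s^2 := by nlinarith [sq_abs s]
    have hA : (0:ℝ) ≤ εr * Real.exp (1 * s^2) := by positivity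
    have hsq : (f x s)^2 ≤ (εr * Real.exp (1 * s^2))^2 := by
      rw [← sq_abs]
      exact pow_le_pow_left₀ (abs_nonneg _) hb 2
    have hexp : Real.exp (1 * s^2) ^ 2 = Real.exp (2*s^2) := by
      rw [sq, ← Real.exp_add]; ring_nf
    have hge : 2 ≤ Real.exp (2*s^2) := by
      have := Real.add_one_le_exp (2*s^2); nlinarith
    nlinarith [sq_nonneg εr]
  by_cases hv : vtop
  · obtain ⟨ν, hν, C₀, hC₀, δ₀, hδ₀, h5⟩ := hf5u hv
    refine ⟨C^2/δ₀^2 + C₀^2 * δ₀^(2*ν-2), 0, by positivity, le_refl 0, fun _ => rfl, ?_⟩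
    intro x hx s
    rcases le_or_gt M₁ |s| with hbig|hsmall
    · have := region1 x hx s hbig
      have h1 : 0 ≤ (C^2/δ₀^2 + C₀^2 * δ₀^(2*ν-2)) * s^2 := by positivity
      linarith
    · have hnn : 0 ≤ 2*εr^2*(Real.exp (2*s^2)-1) := by
        have := one_le_exp_sub (by positivity : (0:ℝ) ≤ 2*s^2); positivity
      rcases le_or_gt |s| δ₀ with h2|h2
      · have hb := h5 x hx s h2
        have key : (f x s)^2 ≤ C₀^2 * δ₀^(2*ν-2) * s^2 := by
          by_cases hs0 : s = 0
          · subst hs0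
            simp only [abs_zero] at hb
            rw [Real.zero_rpow (by linarith : ν ≠ 0)] at hb
            simp only [mul_zero] at hb
            have : f x 0 = 0 := le_antisymm (le_trans (le_abs_self _) hb)
              (by nlinarith [abs_nonneg (f x 0), neg_abs_le (f x 0)])
            simp [this]
          · have hpos : 0 < |s| := abs_pos.mpr hs0
            have hsq : (f x s)^2 ≤ (C₀ * |s|^ν)^2 := by
              rw [← sq_abs]
              exact pow_le_pow_left₀ (abs_nonneg _) hb 2
            have hr1 : (|s|^ν)^2 = |s|^(2*ν) := by
              rw [sq, ← Real.rpow_add hpos]; ring_nf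
            have hr2 : |s|^(2*ν) = |s|^(2*ν-2) * s^2 := by
              rw [show (2*ν) = (2*ν-2) + 2 by ring, Real.rpow_add hpos,
                Real.rpow_two, sq_abs]
              ring_nf
            have hr3 : |s|^(2*ν-2) ≤ δ₀^(2*ν-2) :=
              Real.rpow_le_rpow (abs_nonneg s) h2 (by linarith)
            calc (f x s)^2 ≤ (C₀ * |s|^ν)^2 := hsq
              _ = C₀^2 * (|s|^(2*ν-2) * s^2) := by rw [mul_pow, hr1, hr2]
              _ ≤ C₀^2 * (δ₀^(2*ν-2) * s^2) := by
                  apply mul_le_mul_of_nonneg_left _ (by positivity)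
                  exact mul_le_mul_of_nonneg_right hr3 (sq_nonneg s)
              _ = C₀^2 * δ₀^(2*ν-2) * s^2 := by ring
        have h4 : 0 ≤ C^2/δ₀^2 * s^2 := by positivity
        nlinarith
      · have hb := hfC1 x hx s hsmall.le
        have hsq : (f x s)^2 ≤ C^2 := by
          rw [← sq_abs]
          exact pow_le_pow_left₀ (abs_nonneg _) hb 2
        have hδs : δ₀^2 ≤ s^2 := by nlinarith [sq_abs s, abs_nonneg s]
        have key : C^2 ≤ C^2/δ₀^2 * s^2 := by
          rw [div_mul_eq_mul_div, le_div_iff₀ (by positivity)]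
          nlinarith
        have h4 : 0 ≤ C₀^2 * δ₀^(2*ν-2) * s^2 := by positivity
        nlinarith
  · refine ⟨0, C^2, le_refl 0, by positivity, fun h => absurd h hv, ?_⟩
    intro x hx s
    rcases le_or_gt M₁ |s| with hbig|hsmall
    · have := region1 x hx s hbig
      nlinarith [sq_nonneg C]
    · have hb := hfC1 x hx s hsmall.le
      have hsq : (f x s)^2 ≤ C^2 := by
        rw [← sq_abs]
        exact pow_le_pow_left₀ (abs_nonneg _) hb 2
      have hnn : 0 ≤ 2*εr^2*(Real.exp (2*s^2)-1) := by
        have := one_le_exp_sub (by positivity : (0:ℝ) ≤ 2*s^2); positivity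
      nlinarith
set_option maxHeartbeats 2000000 in
theorem stmt_7 {N : ℕ} (Ω : Set (EuclideanSpace ℝ (Fin N))) (hΩ : MeasurableSet Ω)
    (f : EuclideanSpace ℝ (Fin N) → ℝ → ℝ)
    (hfC : ContinuousOn (fun p : EuclideanSpace ℝ (Fin N) × ℝ => f p.1 p.2)
      (Ω ×ˢ (Set.univ : Set ℝ)))
    (hf1 : ∀ M : ℝ, 0 < M → ∃ C : ℝ, 0 < C ∧ ∀ x ∈ Ω, ∀ s : ℝ, |s| ≤ M → |f x s| ≤ C)
    (hf2 : ∀ α : ℝ, 0 < α → ∀ ε : ℝ, 0 < ε → ∃ M : ℝ, 0 < M ∧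
      ∀ x ∈ Ω, ∀ s : ℝ, M ≤ |s| → |f x s| ≤ ε * Real.exp (α * s ^ 2))
    (hf5u : volume Ω = ⊤ → ∃ μ : ℝ, 1 < μ ∧ ∃ C₀ : ℝ, 0 < C₀ ∧ ∃ δ₀ : ℝ, 0 < δ₀ ∧
      ∀ x ∈ Ω, ∀ s : ℝ, |s| ≤ δ₀ → |f x s| ≤ C₀ * |s| ^ μ)
    (u : EuclideanSpace ℝ (Fin N) → ℝ) (un : ℕ → EuclideanSpace ℝ (Fin N) → ℝ)
    (hu : Measurable u) (hun : ∀ n, Measurable (un n))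
    (huM : ∀ k : ℝ, 0 < k →
      ∫⁻ x in Ω, ENNReal.ofReal (Real.exp ((u x / k) ^ 2) - 1) < ⊤)
    (hunM : ∀ n, ∀ k : ℝ, 0 < k →
      ∫⁻ x in Ω, ENNReal.ofReal (Real.exp ((un n x / k) ^ 2) - 1) < ⊤)
    (hlux : Tendsto (fun n => luxNorm (volume.restrict Ω) (fun x => un n x - u x))
      atTop (nhds 0)) :
    Tendsto (fun n => ∫⁻ x in Ω, ENNReal.ofReal ((f x (un n x) - f x (u x)) ^ 2))
      atTop (nhds 0) := by
  classical
  -- measurability of the difference sequence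
  have hvm : ∀ n, Measurable (fun x => un n x - u x) := fun n => (hun n).sub hu
  -- each difference is in the exponential class
  have hfin1 : ∀ n, ∫⁻ x in Ω,
      ENNReal.ofReal (Real.exp (1 * (un n x - u x) ^ 2) - 1) < ⊤ := by
    intro n
    have hptw : ∀ x, Real.exp (1 * (un n x - u x) ^ 2) - 1 ≤
        (1/2) * (Real.exp (4 * (un n x)^2) - 1) + (1/2) * (Real.exp (4 * (u x)^2) - 1) := by
      intro x
      have h := exp_amgm (2 * (un n x)^2) (2 * (u x)^2)
      rw [show 2*(2*(un n x)^2) = 4*(un n x)^2 by ring,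
        show 2*(2*(u x)^2) = 4*(u x)^2 by ring] at h
      have h2 : Real.exp (1 * (un n x - u x) ^ 2) ≤
          Real.exp (2 * (un n x)^2 + 2 * (u x)^2) := by
        apply Real.exp_le_exp.2
        nlinarith [sq_nonneg (un n x + u x)]
      linarith
    calc ∫⁻ x in Ω, ENNReal.ofReal (Real.exp (1 * (un n x - u x) ^ 2) - 1)
        ≤ ∫⁻ x in Ω, (ENNReal.ofReal ((1/2) * (Real.exp (4 * (un n x)^2) - 1))
            + ENNReal.ofReal ((1/2) * (Real.exp (4 * (u x)^2) - 1))) := by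
          apply lintegral_mono; intro x
          exact le_trans (ENNReal.ofReal_le_ofReal (hptw x)) ENNReal.ofReal_add_le
      _ = (∫⁻ x in Ω, ENNReal.ofReal ((1/2) * (Real.exp (4 * (un n x)^2) - 1)))
            + ∫⁻ x in Ω, ENNReal.ofReal ((1/2) * (Real.exp (4 * (u x)^2) - 1)) := by
          apply lintegral_add_left
          fun_prop
      _ < ⊤ := by
          apply ENNReal.add_lt_top.2
          constructor
          · calc ∫⁻ x in Ω, ENNReal.ofReal ((1/2) * (Real.exp (4 * (un n x)^2) - 1))
                ≤ ∫⁻ x in Ω, ENNReal.ofReal (Real.exp (4 * (un n x)^2) - 1) := by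
                  apply lintegral_mono; intro x
                  apply ENNReal.ofReal_le_ofReal
                  have := one_le_exp_sub (by positivity : (0:ℝ) ≤ 4 * (un n x)^2)
                  linarith
              _ < ⊤ := finite_exp_mul (hunM n) (by norm_num)
          · calc ∫⁻ x in Ω, ENNReal.ofReal ((1/2) * (Real.exp (4 * (u x)^2) - 1))
                ≤ ∫⁻ x in Ω, ENNReal.ofReal (Real.exp (4 * (u x)^2) - 1) := by
                  apply lintegral_mono; intro x
                  apply ENNReal.ofReal_le_ofReal
                  have := one_le_exp_sub (by positivity : (0:ℝ) ≤ 4 * (u x)^2)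
                  linarith
              _ < ⊤ := finite_exp_mul huM (by norm_num)
  -- convergence in measure
  have hTIM : TendstoInMeasure (volume.restrict Ω) un atTop u := by
    apply tim_of_small hvm
    intro θ hθ
    exact eventually_lux_le_small hvm hfin1 hlux one_pos hθ
  -- basic finite integrals for u
  set I2 := ∫⁻ x in Ω, ENNReal.ofReal (Real.exp (2 * (u x)^2) - 1) with hI2def
  set I8 := ∫⁻ x in Ω, ENNReal.ofReal (Real.exp (8 * (u x)^2) - 1) with hI8def
  set J := ∫⁻ x in Ω, ENNReal.ofReal ((u x)^2) with hJdef
  have hI2fin : I2 ≠ ⊤ := (finite_exp_mul huM (by norm_num)).ne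
  have hI8fin : I8 ≠ ⊤ := (finite_exp_mul huM (by norm_num)).ne
  have hJfin : J ≠ ⊤ := by
    have : J ≤ ∫⁻ x in Ω, ENNReal.ofReal (Real.exp (1 * (u x)^2) - 1) := by
      apply lintegral_mono; intro x
      apply ENNReal.ofReal_le_ofReal
      have := Real.add_one_le_exp (1 * (u x)^2)
      nlinarith
    exact (lt_of_le_of_lt this (finite_exp_mul huM one_pos)).ne
  -- a helper to pull nonnegative real constants out of lintegrals
  have hconstmul : ∀ (c : ℝ), 0 ≤ c → ∀ (w : EuclideanSpace ℝ (Fin N) → ℝ),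
      (∫⁻ x in Ω, ENNReal.ofReal (c * w x))
        = ENNReal.ofReal c * ∫⁻ x in Ω, ENNReal.ofReal (w x) := by
    intro c hc w
    rw [← lintegral_const_mul' _ _ ENNReal.ofReal_ne_top]
    congr 1; funext x; rw [← ENNReal.ofReal_mul hc]
  -- main subsequence argument
  apply tendsto_of_subseq_tendsto
  intro ns hns
  have hTIMsub : TendstoInMeasure (volume.restrict Ω) (fun i => un (ns i)) atTop u :=
    fun ε hε => (hTIM ε hε).comp hns
  obtain ⟨ms, hms, hae⟩ := hTIMsub.exists_seq_tendsto_ae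
  refine ⟨ms, ?_⟩
  have hφ : Tendsto (fun i => ns (ms i)) atTop atTop := hns.comp hms.tendsto_atTop
  rw [ENNReal.tendsto_nhds_zero]
  intro ε' hε'
  -- reduce to a small positive finite target
  set ε'' := min ε' 1 with hε''def
  have hε''0 : 0 < ε'' := lt_min hε' one_pos
  have hε''top : ε'' ≠ ⊤ := ne_top_of_le_ne_top ENNReal.one_ne_top (min_le_right _ _)
  set q := ε'' / 4 with hqdef
  have hq0 : q ≠ 0 := by
    simp only [hqdef, ne_eq, ENNReal.div_eq_zero_iff, not_or]
    exact ⟨hε''0.ne', by norm_num⟩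
  have hqtop : q ≠ ⊤ := (ENNReal.div_lt_top hε''top (by norm_num)).ne
  -- choose the epsilon for the growth bound
  set R := ENNReal.ofReal (1/2) * I8 + ENNReal.ofReal (1/2) with hRdef
  have hRtop : R ≠ ⊤ := by
    apply ENNReal.add_ne_top.2
    exact ⟨ENNReal.mul_ne_top ENNReal.ofReal_ne_top hI8fin, ENNReal.ofReal_ne_top⟩
  have hR0 : R ≠ 0 := by
    simp only [hRdef, ne_eq, add_eq_zero, not_and]
    intro _
    simp [ENNReal.ofReal_eq_zero]
  set c := q * R⁻¹ with hcdef
  have hc0 : c ≠ 0 := mul_ne_zero hq0 (ENNReal.inv_ne_zero.2 hRtop)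
  have hctop : c ≠ ⊤ := ENNReal.mul_ne_top hqtop (ENNReal.inv_ne_top.2 hR0)
  set t := c.toReal with htdef
  have ht0 : 0 < t := ENNReal.toReal_pos hc0 hctop
  set εr := Real.sqrt (t/4) with hεrdef
  have hεr : 0 < εr := Real.sqrt_pos.2 (by positivity)
  have h4εr : 4 * εr^2 = t := by
    rw [hεrdef, Real.sq_sqrt (by positivity : (0:ℝ) ≤ t/4)]; ring
  have key1 : ENNReal.ofReal (4*εr^2) * R = q := by
    rw [h4εr, htdef, ENNReal.ofReal_toReal hctop, hcdef, mul_assoc,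
      ENNReal.inv_mul_cancel hR0 hRtop, mul_one]
  -- growth bound from the structure conditions
  obtain ⟨D, E, hD, hE, hE0, hP⟩ := claimP hεr hf1 hf2 (volume Ω = ⊤) hf5u
  -- choose σ
  have hqr0 : 0 < q.toReal := ENNReal.toReal_pos hq0 hqtop
  set σr := q.toReal / (2*D+1) with hσrdef
  have hσr0 : 0 < σr := by positivity
  have key2 : ENNReal.ofReal (2*D) * ENNReal.ofReal σr ≤ q := by
    rw [← ENNReal.ofReal_mul (by linarith)]
    calc ENNReal.ofReal (2*D*σr) ≤ ENNReal.ofReal q.toReal := by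
          apply ENNReal.ofReal_le_ofReal
          rw [hσrdef]
          calc 2*D*(q.toReal/(2*D+1)) = q.toReal * (2*D/(2*D+1)) := by ring
            _ ≤ q.toReal * 1 := by
                apply mul_le_mul_of_nonneg_left _ hqr0.le
                rw [div_le_one (by linarith)]; linarith
            _ = q.toReal := mul_one _
      _ = q := ENNReal.ofReal_toReal hqtop
  -- component functions
  set A : ℕ → EuclideanSpace ℝ (Fin N) → ENNReal :=
    fun n x => ENNReal.ofReal (4*εr^2 * (Real.exp (2*(un n x)^2) - 1)) with hAdef
  set B : ℕ → EuclideanSpace ℝ (Fin N) → ENNReal :=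
    fun n x => ENNReal.ofReal (2*D*(un n x)^2) with hBdef
  set Cf : EuclideanSpace ℝ (Fin N) → ENNReal :=
    fun x => ENNReal.ofReal (4*εr^2 * (Real.exp (2*(u x)^2) - 1)) with hCdef
  set Df : EuclideanSpace ℝ (Fin N) → ENNReal :=
    fun x => ENNReal.ofReal (2*D*(u x)^2) with hDdef
  set Ef : EuclideanSpace ℝ (Fin N) → ENNReal :=
    fun x => ENNReal.ofReal (4*E) with hEdef
  set G : ℕ → EuclideanSpace ℝ (Fin N) → ENNReal :=
    fun n x => ENNReal.ofReal ((f x (un n x) - f x (u x))^2) with hGdef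
  set H : ℕ → EuclideanSpace ℝ (Fin N) → ENNReal :=
    fun n x => A n x + B n x + (Cf x + Df x + Ef x) with hHdef
  set Hl : EuclideanSpace ℝ (Fin N) → ENNReal :=
    fun x => Cf x + Df x + (Cf x + Df x + Ef x) with hHldef
  -- measurability
  have hAm : ∀ n, Measurable (A n) := by intro n; simp only [hAdef]; fun_prop
  have hBm : ∀ n, Measurable (B n) := by intro n; simp only [hBdef]; fun_prop
  have hCm : Measurable Cf := by simp only [hCdef]; fun_prop
  have hDm : Measurable Df := by simp only [hDdef]; fun_prop
  have hEm : Measurable Ef := by simp only [hEdef]; fun_prop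
  have hGae : ∀ n, AEMeasurable (G n) (volume.restrict Ω) := by
    intro n
    simp only [hGdef]
    exact (((aemeas_comp hΩ hfC (hun n)).sub (aemeas_comp hΩ hfC hu)).pow_const 2).ennreal_ofReal
  have hHm : ∀ n, Measurable (H n) := by
    intro n
    simp only [hHdef]
    exact ((hAm n).add (hBm n)).add ((hCm.add hDm).add hEm)
  have hHGae : ∀ n, AEMeasurable (fun x => H n x - G n x) (volume.restrict Ω) :=
    fun n => (hHm n).aemeasurable.sub (hGae n)
  -- pointwise domination
  have hGH : ∀ᵐ x ∂(volume.restrict Ω), ∀ n, G n x ≤ H n x := by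
    filter_upwards [ae_restrict_mem hΩ] with x hx
    intro n
    have h1 := hP x hx (un n x)
    have h2 := hP x hx (u x)
    have hreal : (f x (un n x) - f x (u x))^2 ≤
        4*εr^2 * (Real.exp (2*(un n x)^2) - 1) + 2*D*(un n x)^2
        + (4*εr^2 * (Real.exp (2*(u x)^2) - 1) + (2*D*(u x)^2 + 4*E)) := by
      nlinarith [sq_nonneg (f x (un n x) + f x (u x))]
    calc G n x ≤ ENNReal.ofReal (4*εr^2 * (Real.exp (2*(un n x)^2) - 1) + 2*D*(un n x)^2
        + (4*εr^2 * (Real.exp (2*(u x)^2) - 1) + (2*D*(u x)^2 + 4*E))) :=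
          ENNReal.ofReal_le_ofReal hreal
      _ ≤ ENNReal.ofReal (4*εr^2 * (Real.exp (2*(un n x)^2) - 1) + 2*D*(un n x)^2)
          + ENNReal.ofReal (4*εr^2 * (Real.exp (2*(u x)^2) - 1) + (2*D*(u x)^2 + 4*E)) :=
          ENNReal.ofReal_add_le
      _ ≤ (A n x + B n x)
          + (Cf x + (Df x + Ef x)) := by
          apply add_le_add ENNReal.ofReal_add_le
          exact le_trans ENNReal.ofReal_add_le (add_le_add le_rfl ENNReal.ofReal_add_le)
      _ = H n x := by simp only [hHdef]; ring
  -- integral identities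
  have hAint : ∀ n, (∫⁻ x in Ω, A n x) = ENNReal.ofReal (4*εr^2)
      * ∫⁻ x in Ω, ENNReal.ofReal (Real.exp (2*(un n x)^2) - 1) := by
    intro n; simp only [hAdef]; exact hconstmul _ (by positivity) _
  have hBint : ∀ n, (∫⁻ x in Ω, B n x) = ENNReal.ofReal (2*D)
      * ∫⁻ x in Ω, ENNReal.ofReal ((un n x)^2) := by
    intro n; simp only [hBdef]; exact hconstmul _ (by positivity) _
  have hCint : (∫⁻ x in Ω, Cf x) = ENNReal.ofReal (4*εr^2) * I2 := by
    simp only [hCdef]; rw [hconstmul _ (by positivity) _]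
  have hDint : (∫⁻ x in Ω, Df x) = ENNReal.ofReal (2*D) * J := by
    simp only [hDdef]; rw [hconstmul _ (by positivity) _]
  have hEint : (∫⁻ x in Ω, Ef x) = ENNReal.ofReal (4*E) * volume Ω := by
    simp only [hEdef]; rw [lintegral_const, Measure.restrict_apply_univ]
  have hHint : ∀ n, (∫⁻ x in Ω, H n x)
      = (∫⁻ x in Ω, A n x) + (∫⁻ x in Ω, B n x)
        + ((∫⁻ x in Ω, Cf x) + (∫⁻ x in Ω, Df x) + (∫⁻ x in Ω, Ef x)) := by
    intro n
    simp only [hHdef]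
    rw [lintegral_add_left (by fun_prop : Measurable fun x => A n x + B n x), lintegral_add_left (hAm n),
      lintegral_add_left (by fun_prop : Measurable fun x => Cf x + Df x), lintegral_add_left hCm]
  have hHlint : (∫⁻ x in Ω, Hl x) = ENNReal.ofReal (4*εr^2) * I2 + ENNReal.ofReal (2*D) * J
      + (ENNReal.ofReal (4*εr^2) * I2 + ENNReal.ofReal (2*D) * J
        + ENNReal.ofReal (4*E) * volume Ω) := by
    simp only [hHldef]
    rw [lintegral_add_left (by fun_prop : Measurable fun x => Cf x + Df x), lintegral_add_left hCm,
      lintegral_add_left (by fun_prop : Measurable fun x => Cf x + Df x), lintegral_add_left hCm, hCint, hDint, hEint]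
  have hET : ENNReal.ofReal (4*E) * volume Ω ≠ ⊤ := by
    by_cases hvol : volume Ω = ⊤
    · rw [hE0 hvol]; simp
    · exact ENNReal.mul_ne_top ENNReal.ofReal_ne_top hvol
  have hHlfin : (∫⁻ x in Ω, Hl x) ≠ ⊤ := by
    rw [hHlint]
    apply ENNReal.add_ne_top.2
    constructor
    · apply ENNReal.add_ne_top.2
      exact ⟨ENNReal.mul_ne_top ENNReal.ofReal_ne_top hI2fin,
        ENNReal.mul_ne_top ENNReal.ofReal_ne_top hJfin⟩
    · apply ENNReal.add_ne_top.2
      refine ⟨ENNReal.add_ne_top.2 ⟨ENNReal.mul_ne_top ENNReal.ofReal_ne_top hI2fin,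
        ENNReal.mul_ne_top ENNReal.ofReal_ne_top hJfin⟩, hET⟩
  -- eventual bound for the exponential integral of u_n
  have hIn : ∀ᶠ n in atTop,
      (∫⁻ x in Ω, ENNReal.ofReal (Real.exp (2*(un n x)^2) - 1)) ≤ R := by
    have h8 := eventually_lux_le_one hvm hfin1 hlux (c := 8) (by norm_num)
    filter_upwards [h8] with n hn
    have hptw : ∀ x, Real.exp (2*(un n x)^2) - 1 ≤
        (1/2)*(Real.exp (8*(u x)^2) - 1) + (1/2)*(Real.exp (8*(un n x - u x)^2) - 1) := by
      intro x
      have h := exp_amgm (4*(u x)^2) (4*(un n x - u x)^2)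
      rw [show 2*(4*(u x)^2) = 8*(u x)^2 by ring,
        show 2*(4*(un n x - u x)^2) = 8*(un n x - u x)^2 by ring] at h
      have h2 : Real.exp (2*(un n x)^2) ≤ Real.exp (4*(u x)^2 + 4*(un n x - u x)^2) := by
        apply Real.exp_le_exp.2
        nlinarith [sq_nonneg (un n x - 2*u x)]
      linarith
    calc (∫⁻ x in Ω, ENNReal.ofReal (Real.exp (2*(un n x)^2) - 1))
        ≤ ∫⁻ x in Ω, (ENNReal.ofReal ((1/2)*(Real.exp (8*(u x)^2) - 1))
            + ENNReal.ofReal ((1/2)*(Real.exp (8*(un n x - u x)^2) - 1))) := by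
          apply lintegral_mono; intro x
          exact le_trans (ENNReal.ofReal_le_ofReal (hptw x)) ENNReal.ofReal_add_le
      _ = (∫⁻ x in Ω, ENNReal.ofReal ((1/2)*(Real.exp (8*(u x)^2) - 1)))
          + ∫⁻ x in Ω, ENNReal.ofReal ((1/2)*(Real.exp (8*(un n x - u x)^2) - 1)) := by
          apply lintegral_add_left; fun_prop
      _ ≤ ENNReal.ofReal (1/2) * I8 + ENNReal.ofReal (1/2) * 1 := by
          apply add_le_add
          · exact le_of_eq (by rw [hconstmul _ (by norm_num) _])
          · rw [hconstmul _ (by norm_num) _]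
            exact mul_le_mul_right hn _
      _ = R := by rw [mul_one]
  -- eventual bound for the L² integral of u_n
  have hJn : ∀ᶠ n in atTop,
      (∫⁻ x in Ω, ENNReal.ofReal ((un n x)^2)) ≤ J + ENNReal.ofReal σr := by
    have hJ0 : 0 ≤ J.toReal := ENNReal.toReal_nonneg
    set η := (σr/2) / (J.toReal + 1) with hηdef
    have hη0 : 0 < η := by positivity
    set θ2 := (σr/2) / (1 + η⁻¹) with hθ2def
    have hθ20 : 0 < θ2 := by positivity
    have hsq := eventually_sq_small hvm hfin1 hlux hθ20
    filter_upwards [hsq] with n hn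
    have hptw : ∀ x, (un n x)^2 ≤ (1+η)*(u x)^2 + (1+η⁻¹)*(un n x - u x)^2 := by
      intro x
      have hy := young_ineq hη0 (u x) (un n x - u x)
      rw [show u x + (un n x - u x) = un n x by ring] at hy
      exact hy
    calc (∫⁻ x in Ω, ENNReal.ofReal ((un n x)^2))
        ≤ ∫⁻ x in Ω, (ENNReal.ofReal ((1+η)*(u x)^2)
            + ENNReal.ofReal ((1+η⁻¹)*(un n x - u x)^2)) := by
          apply lintegral_mono; intro x
          exact le_trans (ENNReal.ofReal_le_ofReal (hptw x)) ENNReal.ofReal_add_le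
      _ = (∫⁻ x in Ω, ENNReal.ofReal ((1+η)*(u x)^2))
          + ∫⁻ x in Ω, ENNReal.ofReal ((1+η⁻¹)*(un n x - u x)^2) := by
          apply lintegral_add_left; fun_prop
      _ ≤ (J + ENNReal.ofReal (σr/2)) + ENNReal.ofReal (σr/2) := by
          apply add_le_add
          · rw [hconstmul _ (by positivity) _]
            calc ENNReal.ofReal (1+η) * J = (1 + ENNReal.ofReal η) * J := by
                  rw [ENNReal.ofReal_add (by norm_num) hη0.le, ENNReal.ofReal_one]
              _ = J + ENNReal.ofReal η * J := by ring
              _ ≤ J + ENNReal.ofReal (σr/2) := by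
                  apply add_le_add le_rfl
                  calc ENNReal.ofReal η * J
                      = ENNReal.ofReal η * ENNReal.ofReal J.toReal := by
                        rw [ENNReal.ofReal_toReal hJfin]
                    _ = ENNReal.ofReal (η * J.toReal) := (ENNReal.ofReal_mul hη0.le).symm
                    _ ≤ ENNReal.ofReal (σr/2) := by
                        apply ENNReal.ofReal_le_ofReal
                        rw [hηdef]
                        calc (σr/2) / (J.toReal + 1) * J.toReal
                            = (σr/2) * (J.toReal / (J.toReal+1)) := by ring
                          _ ≤ (σr/2) * 1 := by
                              apply mul_le_mul_of_nonneg_left _ (by positivity)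
                              rw [div_le_one (by linarith)]; linarith
                          _ = σr/2 := mul_one _
          · rw [hconstmul _ (by positivity) _]
            have hne : (1+η⁻¹) ≠ 0 := by positivity
            calc ENNReal.ofReal (1+η⁻¹) * (∫⁻ x in Ω, ENNReal.ofReal ((un n x - u x)^2))
                ≤ ENNReal.ofReal (1+η⁻¹) * ENNReal.ofReal θ2 := mul_le_mul_right hn _
              _ = ENNReal.ofReal ((1+η⁻¹)*θ2) := (ENNReal.ofReal_mul (by positivity)).symm
              _ = ENNReal.ofReal (σr/2) := by
                  congr 1
                  rw [hθ2def, mul_comm, div_mul_cancel₀ _ hne]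
      _ = J + ENNReal.ofReal σr := by
          rw [add_assoc, ← ENNReal.ofReal_add (by positivity) (by positivity)]
          norm_num
  -- eventual bound for the integral of H n
  have hIHb : ∀ᶠ n in atTop, (∫⁻ x in Ω, H n x) ≤ q + (ENNReal.ofReal (2*D) * J + q)
      + (ENNReal.ofReal (4*εr^2) * I2 + ENNReal.ofReal (2*D) * J
        + ENNReal.ofReal (4*E) * volume Ω) := by
    filter_upwards [hIn, hJn] with n h1 h2
    calc (∫⁻ x in Ω, H n x)
        = ENNReal.ofReal (4*εr^2) * (∫⁻ x in Ω, ENNReal.ofReal (Real.exp (2*(un n x)^2) - 1))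
          + ENNReal.ofReal (2*D) * (∫⁻ x in Ω, ENNReal.ofReal ((un n x)^2))
          + (ENNReal.ofReal (4*εr^2) * I2 + ENNReal.ofReal (2*D) * J
            + ENNReal.ofReal (4*E) * volume Ω) := by
          rw [hHint n, hAint n, hBint n, hCint, hDint, hEint]
      _ ≤ q + (ENNReal.ofReal (2*D) * J + q)
          + (ENNReal.ofReal (4*εr^2) * I2 + ENNReal.ofReal (2*D) * J
            + ENNReal.ofReal (4*E) * volume Ω) := by
          apply add_le_add _ le_rfl
          apply add_le_add
          · calc ENNReal.ofReal (4*εr^2)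
                * (∫⁻ x in Ω, ENNReal.ofReal (Real.exp (2*(un n x)^2) - 1))
                ≤ ENNReal.ofReal (4*εr^2) * R := mul_le_mul_right h1 _
              _ = q := key1
          · calc ENNReal.ofReal (2*D) * (∫⁻ x in Ω, ENNReal.ofReal ((un n x)^2))
                ≤ ENNReal.ofReal (2*D) * (J + ENNReal.ofReal σr) := mul_le_mul_right h2 _
              _ = ENNReal.ofReal (2*D) * J + ENNReal.ofReal (2*D) * ENNReal.ofReal σr :=
                  mul_add _ _ _
              _ ≤ ENNReal.ofReal (2*D) * J + q := add_le_add le_rfl key2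
  -- a.e. pointwise convergence of H - G to Hl
  have haetend : ∀ᵐ x ∂(volume.restrict Ω),
      Tendsto (fun i => H (ns (ms i)) x - G (ns (ms i)) x) atTop (nhds (Hl x)) := by
    filter_upwards [hae, ae_restrict_mem hΩ] with x hx hxΩ
    have hft : Tendsto (fun i => f x (un (ns (ms i)) x)) atTop (nhds (f x (u x))) := by
      have hc : ContinuousWithinAt (fun p : EuclideanSpace ℝ (Fin N) × ℝ => f p.1 p.2)
          (Ω ×ˢ (Set.univ : Set ℝ)) (x, u x) := hfC (x, u x) ⟨hxΩ, Set.mem_univ _⟩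
      have hseq : Tendsto (fun i => ((x, un (ns (ms i)) x) : EuclideanSpace ℝ (Fin N) × ℝ))
          atTop (nhdsWithin (x, u x) (Ω ×ˢ (Set.univ : Set ℝ))) := by
        apply tendsto_nhdsWithin_of_tendsto_nhds_of_eventually_within
        · exact tendsto_const_nhds.prodMk_nhds hx
        · exact Eventually.of_forall fun i => ⟨hxΩ, Set.mem_univ _⟩
      exact hc.tendsto.comp hseq
    have hGt : Tendsto (fun i => G (ns (ms i)) x) atTop (nhds 0) := by
      simp only [hGdef]
      have h0 : Tendsto (fun i => (f x (un (ns (ms i)) x) - f x (u x))^2) atTop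
          (nhds (((f x (u x)) - f x (u x))^2)) := (hft.sub tendsto_const_nhds).pow 2
      rw [sub_self] at h0
      have h1 := (ENNReal.continuous_ofReal.tendsto _).comp h0
      simpa [Function.comp_def] using h1
    have hHt : Tendsto (fun i => H (ns (ms i)) x) atTop (nhds (Hl x)) := by
      simp only [hHdef, hHldef, hAdef, hBdef]
      apply Tendsto.add _ tendsto_const_nhds
      apply Tendsto.add
      · exact (ENNReal.continuous_ofReal.tendsto _).comp
          ((((Real.continuous_exp.tendsto _).comp ((hx.pow 2).const_mul 2)).sub_const
            1).const_mul (4*εr^2))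
      · exact (ENNReal.continuous_ofReal.tendsto _).comp ((hx.pow 2).const_mul (2*D))
    have := ENNReal.Tendsto.sub hHt hGt (Or.inr (by simp))
    rw [tsub_zero] at this
    exact this
  -- Fatou
  have hFatou : (∫⁻ x in Ω, Hl x) ≤
      liminf (fun i => ∫⁻ x in Ω, (H (ns (ms i)) x - G (ns (ms i)) x)) atTop := by
    have h1 : (∫⁻ x in Ω, Hl x)
        = ∫⁻ x in Ω, liminf (fun i => H (ns (ms i)) x - G (ns (ms i)) x) atTop := by
      apply lintegral_congr_ae
      filter_upwards [haetend] with x hx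
      exact hx.liminf_eq.symm
    rw [h1]
    exact lintegral_liminf_le' (fun i => hHGae (ns (ms i)))
  -- eventual lower bound from Fatou
  have hev1 : ∀ᶠ i in atTop, (∫⁻ x in Ω, Hl x) ≤
      (∫⁻ x in Ω, (H (ns (ms i)) x - G (ns (ms i)) x)) + q := by
    by_cases h0 : (∫⁻ x in Ω, Hl x) = 0
    · filter_upwards with i; rw [h0]; exact zero_le
    · have hlt : (∫⁻ x in Ω, Hl x) - q < (∫⁻ x in Ω, Hl x) :=
        ENNReal.sub_lt_self hHlfin h0 hq0
      filter_upwards [Filter.eventually_lt_of_lt_liminf (lt_of_lt_of_le hlt hFatou)] with i hi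
      exact tsub_le_iff_right.mp hi.le
  -- splitting identity
  have hsplit : ∀ n, (∫⁻ x in Ω, (H n x - G n x)) + (∫⁻ x in Ω, G n x)
      = ∫⁻ x in Ω, H n x := by
    intro n
    rw [← lintegral_add_left' (hHGae n)]
    apply lintegral_congr_ae
    filter_upwards [hGH] with x hx
    exact tsub_add_cancel_of_le (hx n)
  -- final assembly
  filter_upwards [hφ.eventually hIHb, hev1] with i h1 h2
  have hfinal : (∫⁻ x in Ω, G (ns (ms i)) x) + (∫⁻ x in Ω, Hl x)
      ≤ (q + q + q) + (∫⁻ x in Ω, Hl x) := by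
    calc (∫⁻ x in Ω, G (ns (ms i)) x) + (∫⁻ x in Ω, Hl x)
        ≤ (∫⁻ x in Ω, G (ns (ms i)) x)
          + ((∫⁻ x in Ω, (H (ns (ms i)) x - G (ns (ms i)) x)) + q) := add_le_add le_rfl h2
      _ = ((∫⁻ x in Ω, (H (ns (ms i)) x - G (ns (ms i)) x))
          + (∫⁻ x in Ω, G (ns (ms i)) x)) + q := by ring
      _ = (∫⁻ x in Ω, H (ns (ms i)) x) + q := by rw [hsplit]
      _ ≤ (q + (ENNReal.ofReal (2*D) * J + q)
          + (ENNReal.ofReal (4*εr^2) * I2 + ENNReal.ofReal (2*D) * J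
            + ENNReal.ofReal (4*E) * volume Ω)) + q := add_le_add h1 le_rfl
      _ = (q + q + q) + (ENNReal.ofReal (2*D) * J
          + (ENNReal.ofReal (4*εr^2) * I2 + ENNReal.ofReal (2*D) * J
            + ENNReal.ofReal (4*E) * volume Ω)) := by ring
      _ ≤ (q + q + q) + (ENNReal.ofReal (4*εr^2) * I2 + ENNReal.ofReal (2*D) * J
          + (ENNReal.ofReal (4*εr^2) * I2 + ENNReal.ofReal (2*D) * J
            + ENNReal.ofReal (4*E) * volume Ω)) := by
          apply add_le_add le_rfl
          apply add_le_add _ le_rfl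
          exact le_add_self
      _ = (q + q + q) + (∫⁻ x in Ω, Hl x) := by rw [hHlint]
  have hGle : (∫⁻ x in Ω, G (ns (ms i)) x) ≤ q + q + q :=
    (ENNReal.add_le_add_iff_right hHlfin).mp hfinal
  calc (∫⁻ x in Ω, ENNReal.ofReal ((f x (un (ns (ms i)) x) - f x (u x)) ^ 2))
      = (∫⁻ x in Ω, G (ns (ms i)) x) := rfl
    _ ≤ q + q + q := hGle
    _ ≤ q + q + q + q := le_self_add
    _ = 4 * q := by ring
    _ ≤ ε'' := by rw [hqdef]; exact ENNReal.mul_div_le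
    _ ≤ ε' := min_le_left _ _
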